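/- Let K be a compact Hausdorff space, let (fₙ) be a sequence in C(K) which generates a copy of c₀, let ε > 0, and let (aₙ) be a sequence of clopen subsets of K such that ‖fₙ·χ_{aₙ}‖ > ε for every n, where χ_{aₙ} is the characteristic function of aₙ. Then there is an infinite set M ⊆ ℕ such that the sequence (fₙ·χ_{aₙ})_{n∈M} generates a copy of c₀. -/

import Mathlib

open Topology Filter

noncomputable section

set_option maxHeartbeats 1000000
set_option synthInstance.maxHeartbeats 400000

/-- A sequence generates a copy of `c₀` if it is equivalent to the standard basis of `c₀`. -/
def GeneratesC0 {X : Type*} [NormedAddCommGroup X] [NormedSpace ℝ X] (f : ℕ → X) : Prop :=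
  ∃ c C : ℝ, 0 < c ∧ c ≤ C ∧ ∀ α : ℕ →₀ ℝ,
    c * (⨆ m, |α m|) ≤ ‖α.sum fun m a => a • f m‖ ∧
      ‖α.sum fun m a => a • f m‖ ≤ C * (⨆ m, |α m|)

private lemma rosenthal_extract (r : ℕ → ℕ → ℝ) (hr : ∀ n k, 0 ≤ r n k) (C : ℝ)
    (hC : ∀ n (s : Finset ℕ), ∑ k ∈ s, r n k ≤ C) (δ : ℝ) (hδ : 0 < δ) :
    ∃ φ : ℕ → ℕ, StrictMono φ ∧
      ∀ i (s : Finset ℕ), i ∉ s → ∑ j ∈ s, r (φ i) (φ j) ≤ δ := by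
  classical
  have hsum : ∀ n, Summable (r n) :=
    fun n => summable_of_sum_range_le (hr n) (fun k => hC n (Finset.range k))
  -- tail thresholds
  have htail : ∀ p : ℕ, ∃ T : ℕ, ∀ t : Finset ℕ, (∀ j ∈ t, T ≤ j) → ∑ j ∈ t, r p j ≤ δ / 2 := by
    intro p
    obtain ⟨s, hs⟩ := (hsum p).vanishing (Metric.ball_mem_nhds 0 (by linarith : (0:ℝ) < δ/2))
    refine ⟨s.sup id + 1, fun t ht => ?_⟩
    have hdisj : Disjoint t s := by
      rw [Finset.disjoint_left]
      intro j hj hjs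
      have h1 : j ≤ s.sup id := Finset.le_sup (f := id) hjs
      have h2 := ht j hj
      omega
    have := hs t hdisj
    rw [Metric.mem_ball, dist_zero_right, Real.norm_eq_abs] at this
    exact (le_abs_self _).trans this.le
  choose T hT using htail
  -- good column lemma
  have hgood : ∀ (S : Set ℕ), S.Infinite → ∀ γ : ℝ, 0 < γ → ∀ b : ℕ,
      ∃ k ∈ S, b < k ∧ {n ∈ S | r n k ≤ γ}.Infinite := by
    intro S hS γ hγ b
    by_contra hcon
    push_neg at hcon
    obtain ⟨Tf, hTsub, hTcard⟩ := (hS.diff (Set.finite_Iic b)).exists_subset_card_eq (⌈C / γ⌉₊ + 1)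
    have hTS : ∀ k ∈ Tf, k ∈ S ∧ b < k := by
      intro k hk
      have := hTsub hk
      refine ⟨this.1, ?_⟩
      have := this.2
      simp only [Set.mem_Iic] at this
      omega
    have hfin : (⋃ k ∈ Tf, {n ∈ S | r n k ≤ γ}).Finite := by
      apply Set.Finite.biUnion Tf.finite_toSet
      intro k hk
      rw [Finset.mem_coe] at hk
      exact hcon k (hTS k hk).1 (hTS k hk).2
    obtain ⟨n, hn⟩ := (hS.diff hfin).nonempty
    have hlt : ∀ k ∈ Tf, γ < r n k := by
      intro k hk
      by_contra hle
      push_neg at hle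
      exact hn.2 (Set.mem_biUnion hk ⟨hn.1, hle⟩)
    have hTne : Tf.Nonempty := Finset.card_pos.1 (by omega)
    have h1 : (Tf.card : ℝ) * γ < ∑ k ∈ Tf, r n k := by
      calc (Tf.card : ℝ) * γ = ∑ _k ∈ Tf, γ := by rw [Finset.sum_const, nsmul_eq_mul]
        _ < ∑ k ∈ Tf, r n k := Finset.sum_lt_sum_of_nonempty hTne hlt
    have h2 : C < (Tf.card : ℝ) * γ := by
      rw [hTcard]
      push_cast
      have h3 := Nat.le_ceil (C / γ)
      have h4 : C / γ * γ = C := div_mul_cancel₀ C (ne_of_gt hγ)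
      nlinarith
    exact absurd (hC n Tf) (not_le.2 (h2.trans h1))
  -- the γ sequence
  set γs : ℕ → ℝ := fun i => δ / 4 * (1/2)^i with hγs
  have hγpos : ∀ i, 0 < γs i := fun i => by positivity
  -- step existence
  have hstep : ∀ (i p : ℕ) (S : {S : Set ℕ // S.Infinite}),
      ∃ q : ℕ × {S' : Set ℕ // S'.Infinite}, q.1 ∈ S.1 ∧ p < q.1 ∧ T p ≤ q.1 ∧
        q.2.1 ⊆ S.1 ∧ ∀ n ∈ q.2.1, r n q.1 ≤ γs i ∧ q.1 < n := by
    rintro i p ⟨S, hS⟩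
    obtain ⟨k, hkS, hkb, hinf⟩ := hgood S hS (γs i) (hγpos i) (max p (T p))
    refine ⟨⟨k, ⟨{n ∈ S | r n k ≤ γs i} \ Set.Iic k, hinf.diff (Set.finite_Iic k)⟩⟩,
      hkS, lt_of_le_of_lt (le_max_left _ _) hkb,
      le_of_lt (lt_of_le_of_lt (le_max_right _ _) hkb), ?_, ?_⟩
    · intro n hn
      exact hn.1.1
    · intro n hn
      refine ⟨hn.1.2, ?_⟩
      have := hn.2
      simp only [Set.mem_Iic] at this
      omega
  choose step hs1 hs2 hs3 hs4 hs5 using hstep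
  -- the recursion
  let G : ℕ → ℕ × {S : Set ℕ // S.Infinite} :=
    fun i => Nat.rec (step 0 0 ⟨Set.univ, Set.infinite_univ⟩)
      (fun i prev => step (i+1) prev.1 prev.2) i
  set φ : ℕ → ℕ := fun i => (G i).1 with hφ
  have hGsucc : ∀ i, G (i+1) = step (i+1) (G i).1 (G i).2 := fun i => rfl
  have hB : ∀ i, φ i < φ (i+1) := by
    intro i
    have := hs2 (i+1) (G i).1 (G i).2
    rwa [← hGsucc i] at this
  have hmono : StrictMono φ := strictMono_nat_of_lt_succ hB
  have hCc : ∀ i, T (φ i) ≤ φ (i+1) := by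
    intro i
    have := hs3 (i+1) (G i).1 (G i).2
    rwa [← hGsucc i] at this
  have hA : ∀ i, φ (i+1) ∈ (G i).2.1 := by
    intro i
    have := hs1 (i+1) (G i).1 (G i).2
    rwa [← hGsucc i] at this
  have hD : ∀ i, (G (i+1)).2.1 ⊆ (G i).2.1 := by
    intro i
    have := hs4 (i+1) (G i).1 (G i).2
    rwa [← hGsucc i] at this
  have hE : ∀ i, ∀ n ∈ (G i).2.1, r n (φ i) ≤ γs i ∧ φ i < n := by
    intro i
    cases i with
    | zero => exact hs5 0 0 ⟨Set.univ, Set.infinite_univ⟩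
    | succ i =>
      have := hs5 (i+1) (G i).1 (G i).2
      rwa [← hGsucc i] at this
  have hchain : ∀ i j, i ≤ j → (G j).2.1 ⊆ (G i).2.1 := by
    intro i j hij
    induction j, hij using Nat.le_induction with
    | base => exact subset_rfl
    | succ j hij ih => exact (hD j).trans ih
  have hback : ∀ i j, i < j → r (φ j) (φ i) ≤ γs i := by
    intro i j hij
    obtain ⟨j, rfl⟩ : ∃ j', j = j' + 1 := ⟨j - 1, by omega⟩
    exact (hE i (φ (j+1)) (hchain i j (by omega) (hA j))).1
  refine ⟨φ, hmono, ?_⟩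
  intro i s hi
  have hforward : ∑ j ∈ s.filter (fun j => ¬ j < i), r (φ i) (φ j) ≤ δ / 2 := by
    have hinj : ∀ x ∈ s.filter (fun j => ¬ j < i), ∀ y ∈ s.filter (fun j => ¬ j < i),
        φ x = φ y → x = y := fun x _ y _ h => hmono.injective h
    rw [← Finset.sum_image hinj]
    apply hT (φ i)
    intro k hk
    simp only [Finset.mem_image, Finset.mem_filter] at hk
    obtain ⟨j, ⟨hjs, hji⟩, rfl⟩ := hk
    have hij : i + 1 ≤ j := by
      rcases Nat.lt_or_ge j (i+1) with h | h
      · exfalso; have : j = i := by omega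
        exact hi (this ▸ hjs)
      · exact h
    calc T (φ i) ≤ φ (i+1) := hCc i
      _ ≤ φ j := hmono.monotone hij
  have hbackward : ∑ j ∈ s.filter (fun j => j < i), r (φ i) (φ j) ≤ δ / 2 := by
    calc ∑ j ∈ s.filter (fun j => j < i), r (φ i) (φ j)
        ≤ ∑ j ∈ s.filter (fun j => j < i), γs j := by
          apply Finset.sum_le_sum
          intro j hj
          exact hback j i (Finset.mem_filter.1 hj).2
      _ ≤ ∑ j ∈ Finset.range i, γs j := by
          apply Finset.sum_le_sum_of_subset_of_nonneg
          · intro j hj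
            rw [Finset.mem_range]
            exact (Finset.mem_filter.1 hj).2
          · intro j _ _
            exact (hγpos j).le
      _ = δ / 4 * ∑ j ∈ Finset.range i, (1/2:ℝ)^j := by rw [Finset.mul_sum]
      _ ≤ δ / 4 * 2 := by
          apply mul_le_mul_of_nonneg_left (sum_geometric_two_le i) (by linarith)
      _ = δ / 2 := by ring
  calc ∑ j ∈ s, r (φ i) (φ j)
      = ∑ j ∈ s.filter (fun j => j < i), r (φ i) (φ j)
        + ∑ j ∈ s.filter (fun j => ¬ j < i), r (φ i) (φ j) :=
        (Finset.sum_filter_add_sum_filter_not s _ _).symm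
    _ ≤ δ := by linarith

private lemma finsupp_abs_bddAbove (α : ℕ →₀ ℝ) : BddAbove (Set.range fun m => |α m|) := by
  apply Set.Finite.bddAbove
  apply Set.Finite.subset (Set.Finite.insert 0 ((α.support.finite_toSet).image fun k => |α k|))
  rintro - ⟨m, rfl⟩
  by_cases hm : m ∈ α.support
  · exact Set.mem_insert_of_mem _ ⟨m, hm, rfl⟩
  · show |α m| ∈ _
    rw [Finsupp.notMem_support_iff.1 hm, abs_zero]
    exact Set.mem_insert _ _

private lemma finsupp_exists_max (α : ℕ →₀ ℝ) (h : α ≠ 0) :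
    ∃ i, α i ≠ 0 ∧ (⨆ m, |α m|) = |α i| := by
  obtain ⟨i, hi, hmax⟩ := α.support.exists_max_image (fun k => |α k|)
    (Finsupp.support_nonempty_iff.2 h)
  refine ⟨i, Finsupp.mem_support_iff.1 hi,
    le_antisymm (ciSup_le fun k => ?_) (le_ciSup (finsupp_abs_bddAbove α) i)⟩
  by_cases hk : k ∈ α.support
  · exact hmax k hk
  · rw [Finsupp.notMem_support_iff.1 hk, abs_zero]
    exact abs_nonneg _

private lemma finsupp_sum_apply_cm {K : Type*} [TopologicalSpace K]
    (α : ℕ →₀ ℝ) (h : ℕ → C(K, ℝ)) (z : K) :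
    (α.sum fun k b => b • h k) z = ∑ k ∈ α.support, α k * h k z := by
  simp [Finsupp.sum, smul_eq_mul]

/-- If `(fₙ)` generates a copy of `c₀`, `aₙ` are clopen sets and `‖fₙ·χ_{aₙ}‖ > ε`, then some
infinite subsequence of `(fₙ·χ_{aₙ})` generates a copy of `c₀`. -/
theorem generatesC0_of_restrictions (K : Type*) [TopologicalSpace K] [CompactSpace K]
    [T2Space K] (f : ℕ → C(K, ℝ)) (hf : GeneratesC0 f) (ε : ℝ) (hε : 0 < ε)
    (a : ℕ → Set K) (ha : ∀ n, IsClopen (a n))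
    (g : ℕ → C(K, ℝ))
    (hg : ∀ n x, g n x = f n x * Set.indicator (a n) (fun _ => (1 : ℝ)) x)
    (hnorm : ∀ n, ε < ‖g n‖) :
    ∃ φ : ℕ → ℕ, StrictMono φ ∧ GeneratesC0 (fun k => g (φ k)) := by
  classical
  obtain ⟨c, C, hc, hcC, hbound⟩ := hf
  have hC0 : (0:ℝ) < C := lt_of_lt_of_le hc hcC
  -- |g| ≤ |f| pointwise
  have hind : ∀ n z, |g n z| ≤ |f n z| := by
    intro n z
    rw [hg n z, abs_mul]
    by_cases hz : z ∈ a n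
    · simp [Set.indicator_of_mem hz]
    · simp [Set.indicator_of_notMem hz, abs_nonneg]
  -- pointwise absolute summability of f with bound C
  have hF1 : ∀ (z : K) (s : Finset ℕ), ∑ k ∈ s, |f k z| ≤ C := by
    intro z s
    set σ : ℕ → ℝ := fun k => if 0 ≤ f k z then 1 else -1 with hσ
    set α : ℕ →₀ ℝ := Finsupp.indicator s (fun k _ => σ k) with hα
    have hαmem : ∀ k ∈ s, α k = σ k := fun k hk => Finsupp.indicator_of_mem hk _
    have hαnot : ∀ k, k ∉ s → α k = 0 := fun k hk => Finsupp.indicator_of_notMem hk _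
    have hsum : (α.sum fun m b => b • f m) = ∑ k ∈ s, σ k • f k := by
      rw [Finsupp.sum_of_support_subset α (Finsupp.support_indicator_subset _ _) _
        (fun i _ => zero_smul ℝ (f i))]
      exact Finset.sum_congr rfl (fun k hk => by rw [hαmem k hk])
    have heval : (∑ k ∈ s, σ k • f k) z = ∑ k ∈ s, |f k z| := by
      rw [ContinuousMap.coe_sum, Finset.sum_apply]
      apply Finset.sum_congr rfl
      intro k _
      by_cases h : 0 ≤ f k z
      · simp [hσ, h, abs_of_nonneg h]
      · push_neg at h
        simp [hσ, not_le.2 h, abs_of_neg h]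
    have h3 : (⨆ m, |α m|) ≤ 1 := by
      apply ciSup_le
      intro k
      by_cases hk : k ∈ s
      · rw [hαmem k hk, hσ]
        by_cases h : 0 ≤ f k z <;> simp [h]
      · rw [hαnot k hk, abs_zero]; norm_num
    calc ∑ k ∈ s, |f k z| = (∑ k ∈ s, σ k • f k) z := heval.symm
      _ ≤ |(∑ k ∈ s, σ k • f k) z| := le_abs_self _
      _ ≤ ‖∑ k ∈ s, σ k • f k‖ := by
          rw [← Real.norm_eq_abs]
          exact ContinuousMap.norm_coe_le_norm _ z
      _ = ‖α.sum fun m b => b • f m‖ := by rw [hsum]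
      _ ≤ C * (⨆ m, |α m|) := (hbound α).2
      _ ≤ C * 1 := mul_le_mul_of_nonneg_left h3 hC0.le
      _ = C := mul_one C
  have hF1' : ∀ (z : K) (s : Finset ℕ), ∑ k ∈ s, |g k z| ≤ C := by
    intro z s
    exact le_trans (Finset.sum_le_sum fun k _ => hind k z) (hF1 z s)
  -- witness points
  have hxex : ∀ n, ∃ z : K, ε < |g n z| := by
    intro n
    by_contra h
    push_neg at h
    exact absurd ((ContinuousMap.norm_le _ hε.le).2
      (fun z => by rw [Real.norm_eq_abs]; exact h z)) (not_le.2 (hnorm n))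
  choose x hx using hxex
  -- extraction
  obtain ⟨φ, hmono, hros⟩ := rosenthal_extract (fun n k => |g k (x n)|)
    (fun n k => abs_nonneg _) C (fun n s => hF1' (x n) s) (ε/2) (half_pos hε)
  have hgC : ε ≤ C := by
    have h0 : ‖g 0‖ ≤ C := by
      apply (ContinuousMap.norm_le _ hC0.le).2
      intro z
      rw [Real.norm_eq_abs]
      have := hF1' z {0}
      simpa using this
    exact le_trans (hnorm 0).le h0
  refine ⟨φ, hmono, ε/2, C, half_pos hε, by linarith, ?_⟩
  intro α
  set M := ⨆ m', |α m'| with hM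
  have hMle : ∀ k, |α k| ≤ M := fun k => le_ciSup (finsupp_abs_bddAbove α) k
  have hMnonneg : 0 ≤ M := le_trans (abs_nonneg (α 0)) (hMle 0)
  have hsupsum : ∀ z, ∑ k ∈ α.support, |g (φ k) z| ≤ C := by
    intro z
    have hinj : ∀ x ∈ α.support, ∀ y ∈ α.support, φ x = φ y → x = y :=
      fun x _ y _ h => hmono.injective h
    calc ∑ k ∈ α.support, |g (φ k) z|
        = ∑ j ∈ α.support.image φ, |g j z| :=
          (Finset.sum_image (f := fun j => |g j z|) hinj).symm
      _ ≤ C := hF1' z _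
  have hupper : ‖α.sum fun k b => b • g (φ k)‖ ≤ C * M := by
    apply (ContinuousMap.norm_le _ (mul_nonneg hC0.le hMnonneg)).2
    intro z
    rw [Real.norm_eq_abs, finsupp_sum_apply_cm]
    calc |∑ k ∈ α.support, α k * g (φ k) z|
        ≤ ∑ k ∈ α.support, |α k * g (φ k) z| := Finset.abs_sum_le_sum_abs _ _
      _ ≤ ∑ k ∈ α.support, M * |g (φ k) z| := by
          apply Finset.sum_le_sum
          intro k _
          rw [abs_mul]
          exact mul_le_mul_of_nonneg_right (hMle k) (abs_nonneg _)
      _ = M * ∑ k ∈ α.support, |g (φ k) z| := by rw [Finset.mul_sum]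
      _ ≤ M * C := mul_le_mul_of_nonneg_left (hsupsum z) hMnonneg
      _ = C * M := mul_comm _ _
  refine ⟨?_, hupper⟩
  by_cases hα : α = 0
  · subst hα
    have hM0 : M = 0 := by
      simp only [hM, Finsupp.coe_zero, Pi.zero_apply, abs_zero, ciSup_const]
    rw [hM0, mul_zero]
    exact norm_nonneg _
  · obtain ⟨i, hi0, hiM⟩ := finsupp_exists_max α hα
    have hisupp : i ∈ α.support := Finsupp.mem_support_iff.2 hi0
    set y := x (φ i) with hy
    have e1 : M * ε ≤ |α i * g (φ i) y| := by
      rw [abs_mul, ← hiM]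
      exact mul_le_mul_of_nonneg_left (hx (φ i)).le hMnonneg
    have e2 : |∑ k ∈ α.support.erase i, α k * g (φ k) y| ≤ M * (ε/2) := by
      calc |∑ k ∈ α.support.erase i, α k * g (φ k) y|
          ≤ ∑ k ∈ α.support.erase i, |α k * g (φ k) y| := Finset.abs_sum_le_sum_abs _ _
        _ ≤ ∑ k ∈ α.support.erase i, M * |g (φ k) (x (φ i))| := by
            apply Finset.sum_le_sum
            intro k _
            rw [abs_mul]
            exact mul_le_mul_of_nonneg_right (hMle k) (abs_nonneg _)
        _ = M * ∑ k ∈ α.support.erase i, |g (φ k) (x (φ i))| := by rw [Finset.mul_sum]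
        _ ≤ M * (ε/2) := mul_le_mul_of_nonneg_left
            (hros i (α.support.erase i) (Finset.notMem_erase i _)) hMnonneg
    have e3 : (α.sum fun k b => b • g (φ k)) y
        = α i * g (φ i) y + ∑ k ∈ α.support.erase i, α k * g (φ k) y := by
      rw [finsupp_sum_apply_cm]
      exact (Finset.add_sum_erase _ _ hisupp).symm
    have e4 : ∀ A B : ℝ, |A| - |B| ≤ |A + B| := by
      intro A B
      have h1 : |A| ≤ |A + B| + |B| := by
        calc |A| = |A + B + (-B)| := by ring_nf
          _ ≤ |A + B| + |(-B)| := abs_add_le _ _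
          _ = |A + B| + |B| := by rw [abs_neg]
      linarith
    calc ε/2 * M = M * ε - M * (ε/2) := by ring
      _ ≤ |α i * g (φ i) y| - |∑ k ∈ α.support.erase i, α k * g (φ k) y| := by
          have := e1; have := e2; linarith
      _ ≤ |α i * g (φ i) y + ∑ k ∈ α.support.erase i, α k * g (φ k) y| := e4 _ _
      _ = |(α.sum fun k b => b • g (φ k)) y| := by rw [e3]
      _ ≤ ‖α.sum fun k b => b • g (φ k)‖ := by
          rw [← Real.norm_eq_abs]
          exact ContinuousMap.norm_coe_le_norm _ y
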